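/- arXiv:1410.5419 — 2 statements merged into one kernel-verified Lean document; each statement's English description precedes it below -/
import Mathlib

section
/- In the SVD-based KL truncation setup, if the reduced dimension d is chosen so that sqrt(Σ_{j=d+1}^{min(P,r)} σ_j²) ≤ ε · sqrt(Σ_{j=1}^{min(P,r)} σ_j²), then the truncated expansion y^d satisfies sqrt(∫_Ξ ‖y^p(ξ) − y^d(ξ)‖²_Γ μ dξ) ≤ ε · sqrt(∫_Ξ ‖y^p(ξ) − ŷ₀‖²_Γ μ dξ). -/
open MeasureTheory Matrix

lemma sum_dotProduct' {m : Type*} [Fintype m] {ι : Type*} (S : Finset ι)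
    (w : ι → m → ℝ) (v : m → ℝ) :
    dotProduct (∑ j ∈ S, w j) v = ∑ j ∈ S, dotProduct (w j) v := by
  simp [dotProduct, Finset.sum_apply, Finset.sum_mul]
  exact Finset.sum_comm

lemma mulVec_sum' {m : Type*} [Fintype m] {ι : Type*} (S : Finset ι)
    (A : Matrix m m ℝ) (w : ι → m → ℝ) :
    A.mulVec (∑ j ∈ S, w j) = ∑ j ∈ S, A.mulVec (w j) := by
  exact map_sum (Matrix.mulVecLin A) w S

lemma dotProduct_sum' {m : Type*} [Fintype m] {ι : Type*} (S : Finset ι)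
    (v : m → ℝ) (w : ι → m → ℝ) :
    dotProduct v (∑ j ∈ S, w j) = ∑ j ∈ S, dotProduct v (w j) := by
  simp [dotProduct, Finset.sum_apply, Finset.mul_sum]
  exact Finset.sum_comm

/-- Theorem 1 of the paper: if the reduced dimension d satisfies the
singular-value tail criterion with tolerance ε, then the relative Γ-weighted
mean-square truncation error is bounded by ε. -/
theorem stmt_3 {P r : ℕ} {Ξ : Type*} [MeasurableSpace Ξ]
    (μ : Measure Ξ) [IsProbabilityMeasure μ]
    (ψ : Ξ → Fin P → ℝ)
    (hint : ∀ j k, Integrable (fun ξ => ψ ξ j * ψ ξ k) μ)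
    (horth : ∀ j k, ∫ ξ, ψ ξ j * ψ ξ k ∂μ = if j = k then (1 : ℝ) else 0)
    (Γ Γhalf : Matrix (Fin r) (Fin r) ℝ)
    (hΓ : Γ.PosDef) (hΓhalf : Γhalf.PosDef) (hsq : Γhalf * Γhalf = Γ)
    (σ : Fin (min P r) → ℝ) (hσ : ∀ j, 0 ≤ σ j) (hord : ∀ j k, j ≤ k → σ k ≤ σ j)
    (tυ : Fin (min P r) → Fin r → ℝ)
    (htυ : ∀ j k, dotProduct (tυ j) (tυ k) = if j = k then (1 : ℝ) else 0)
    (υ : Fin (min P r) → Fin r → ℝ) (hυ : ∀ j, υ j = Γhalf⁻¹.mulVec (tυ j))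
    (θhat : Fin (min P r) → Fin P → ℝ)
    (hθhat : ∀ j k, dotProduct (θhat j) (θhat k) = if j = k then (1 : ℝ) else 0)
    (θ : Fin (min P r) → Ξ → ℝ) (hθ : ∀ j ξ, θ j ξ = dotProduct (θhat j) (ψ ξ))
    (yhat0 : Fin r → ℝ) (d : ℕ)
    (yp yd : Ξ → Fin r → ℝ)
    (hyp : ∀ ξ i, yp ξ i = yhat0 i + ∑ j, σ j * υ j i * θ j ξ)
    (hyd : ∀ ξ i, yd ξ i =
      yhat0 i + ∑ j ∈ Finset.univ.filter (fun j : Fin (min P r) => (j : ℕ) < d),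
        σ j * υ j i * θ j ξ)
    (ε : ℝ) (hε : 0 < ε)
    (hcrit : Real.sqrt (∑ j ∈ Finset.univ.filter
        (fun j : Fin (min P r) => d ≤ (j : ℕ)), σ j ^ 2) ≤
      ε * Real.sqrt (∑ j, σ j ^ 2)) :
    Real.sqrt (∫ ξ, dotProduct (yp ξ - yd ξ) (Γ.mulVec (yp ξ - yd ξ)) ∂μ) ≤
      ε * Real.sqrt (∫ ξ, dotProduct (yp ξ - yhat0) (Γ.mulVec (yp ξ - yhat0)) ∂μ) := by
  -- Γhalf is symmetric and invertible
  have hΓhT : Γhalfᵀ = Γhalf := by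
    have h := hΓhalf.isHermitian
    rwa [Matrix.IsHermitian, Matrix.conjTranspose_eq_transpose_of_trivial] at h
  have hunit : IsUnit Γhalf.det := isUnit_iff_ne_zero.mpr (ne_of_gt hΓhalf.det_pos)
  -- υ is Γ-orthonormal
  have key : ∀ j k, dotProduct (υ j) (Γ.mulVec (υ k)) = if j = k then (1 : ℝ) else 0 := by
    intro j k
    rw [hυ, hυ, ← hsq, Matrix.mulVec_mulVec, mul_assoc,
      Matrix.mul_nonsing_inv _ hunit, mul_one, Matrix.dotProduct_mulVec,
      ← Matrix.mulVec_transpose, hΓhT, Matrix.mulVec_mulVec,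
      Matrix.mul_nonsing_inv _ hunit, Matrix.one_mulVec]
    exact htυ j k
  -- θ products are integrable with the right integrals
  have hθint : ∀ j k, Integrable (fun ξ => θ j ξ * θ k ξ) μ := by
    intro j k
    have : (fun ξ => θ j ξ * θ k ξ) =
        fun ξ => ∑ a, ∑ b, θhat j a * θhat k b * (ψ ξ a * ψ ξ b) := by
      funext ξ
      rw [hθ, hθ, dotProduct, dotProduct, Finset.sum_mul_sum]
      apply Finset.sum_congr rfl; intro a _
      apply Finset.sum_congr rfl; intro b _
      ring
    rw [this]
    exact integrable_finset_sum _ fun a _ =>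
      integrable_finset_sum _ fun b _ => ((hint a b).const_mul _)
  have hθorth : ∀ j k, ∫ ξ, θ j ξ * θ k ξ ∂μ = if j = k then (1 : ℝ) else 0 := by
    intro j k
    have h1 : (fun ξ => θ j ξ * θ k ξ) =
        fun ξ => ∑ a, ∑ b, θhat j a * θhat k b * (ψ ξ a * ψ ξ b) := by
      funext ξ
      rw [hθ, hθ, dotProduct, dotProduct, Finset.sum_mul_sum]
      apply Finset.sum_congr rfl; intro a _
      apply Finset.sum_congr rfl; intro b _
      ring
    rw [h1, integral_finset_sum _ fun a _ => integrable_finset_sum _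
      fun b _ => ((hint a b).const_mul _)]
    have h2 : ∀ a : Fin P, ∫ ξ, ∑ b, θhat j a * θhat k b * (ψ ξ a * ψ ξ b) ∂μ
        = θhat j a * θhat k a := by
      intro a
      rw [integral_finset_sum _ fun b _ => ((hint a b).const_mul _)]
      have : ∀ b : Fin P, ∫ ξ, θhat j a * θhat k b * (ψ ξ a * ψ ξ b) ∂μ
          = θhat j a * θhat k b * (if a = b then (1:ℝ) else 0) := by
        intro b
        rw [integral_const_mul, horth a b]
      simp only [this, mul_ite, mul_one, mul_zero]
      simp
    simp only [h2]
    rw [← dotProduct]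
    exact hθhat j k
  -- pointwise quadratic form over a subset S
  set f : Finset (Fin (min P r)) → Ξ → Fin r → ℝ :=
    fun S ξ i => ∑ j ∈ S, σ j * υ j i * θ j ξ with hf
  have hquad : ∀ (S : Finset (Fin (min P r))) ξ,
      dotProduct (f S ξ) (Γ.mulVec (f S ξ)) = ∑ j ∈ S, σ j ^ 2 * (θ j ξ)^2 := by
    intro S ξ
    have hfs : f S ξ = ∑ j ∈ S, (σ j * θ j ξ) • υ j := by
      funext i
      rw [hf]
      simp only [Finset.sum_apply, Pi.smul_apply, smul_eq_mul]
      apply Finset.sum_congr rfl; intro j _; ring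
    rw [hfs, mulVec_sum', sum_dotProduct']
    have : ∀ j ∈ S, dotProduct ((σ j * θ j ξ) • υ j)
        (∑ k ∈ S, Γ.mulVec ((σ k * θ k ξ) • υ k)) = σ j ^ 2 * (θ j ξ)^2 := by
      intro j hj
      rw [dotProduct_sum']
      have h3 : ∀ k ∈ S, dotProduct ((σ j * θ j ξ) • υ j) (Γ.mulVec ((σ k * θ k ξ) • υ k))
          = (σ j * θ j ξ) * (σ k * θ k ξ) * (if j = k then (1:ℝ) else 0) := by
        intro k _
        rw [Matrix.mulVec_smul, smul_dotProduct, dotProduct_smul, key j k,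
          smul_eq_mul, smul_eq_mul]
        ring
      rw [Finset.sum_congr rfl h3]
      simp only [mul_ite, mul_one, mul_zero]
      rw [Finset.sum_ite_eq S j (fun x => σ j * θ j ξ * (σ x * θ x ξ)), if_pos hj]
      ring
    rw [Finset.sum_congr rfl this]
  -- integral of the quadratic form over a subset S
  have hIS : ∀ S : Finset (Fin (min P r)),
      ∫ ξ, dotProduct (f S ξ) (Γ.mulVec (f S ξ)) ∂μ = ∑ j ∈ S, σ j ^ 2 := by
    intro S
    have h1 : (fun ξ => dotProduct (f S ξ) (Γ.mulVec (f S ξ)))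
        = fun ξ => ∑ j ∈ S, σ j ^ 2 * (θ j ξ * θ j ξ) := by
      funext ξ; rw [hquad]; apply Finset.sum_congr rfl; intro j _; ring
    rw [h1, integral_finset_sum _ fun j _ => ((hθint j j).const_mul _)]
    apply Finset.sum_congr rfl; intro j _
    rw [integral_const_mul, hθorth j j]
    simp
  -- identify the differences with f on appropriate subsets
  have hdiff1 : ∀ ξ, yp ξ - yd ξ
      = f (Finset.univ.filter (fun j : Fin (min P r) => d ≤ (j : ℕ))) ξ := by
    intro ξ; funext i
    rw [Pi.sub_apply, hyp, hyd, hf]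
    simp only
    rw [add_sub_add_left_eq_sub,
      ← Finset.sum_filter_add_sum_filter_not Finset.univ
        (fun j : Fin (min P r) => (j : ℕ) < d) (fun j => σ j * υ j i * θ j ξ)]
    simp [not_lt]
  have hdiff2 : ∀ ξ, yp ξ - yhat0 = f Finset.univ ξ := by
    intro ξ; funext i
    rw [Pi.sub_apply, hyp, hf]
    simp
  have e1 : ∫ ξ, dotProduct (yp ξ - yd ξ) (Γ.mulVec (yp ξ - yd ξ)) ∂μ
      = ∑ j ∈ Finset.univ.filter (fun j : Fin (min P r) => d ≤ (j : ℕ)), σ j ^ 2 := by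
    rw [← hIS]
    refine integral_congr_ae (Filter.Eventually.of_forall fun ξ => ?_)
    dsimp only
    rw [hdiff1 ξ]
  have e2 : ∫ ξ, dotProduct (yp ξ - yhat0) (Γ.mulVec (yp ξ - yhat0)) ∂μ
      = ∑ j, σ j ^ 2 := by
    rw [← hIS Finset.univ]
    refine integral_congr_ae (Filter.Eventually.of_forall fun ξ => ?_)
    dsimp only
    rw [hdiff2 ξ]
  rw [e1, e2]
  exact hcrit
end

section
/- Let μ be a probability density on Ξ ⊆ ℝ^s and let p ≥ 0. Then there exist Q points ξ^{(1)},...,ξ^{(Q)} ∈ Ξ and weights w_1,...,w_Q ≥ 0 with Q ≤ dim of the space of polynomials of degree ≤ 2p in s variables, such that ∫_Ξ q(ξ) μ(ξ) dξ = Σ_{j=1}^Q w_j q(ξ^{(j)}) for every polynomial q of total degree ≤ 2p. -/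
open MeasureTheory Module

section aux

variable {s : ℕ}

lemma tch_ae_mem {Ξ : Set (Fin s → ℝ)} (μ : Measure (Fin s → ℝ)) (hsupp : μ Ξᶜ = 0) :
    ∀ᵐ x ∂μ, x ∈ Ξ := by
  rw [MeasureTheory.ae_iff]
  exact hsupp

lemma tch_integrable {Ξ : Set (Fin s → ℝ)} (hΞ : IsCompact Ξ)
    (μ : Measure (Fin s → ℝ)) [IsFiniteMeasure μ] (hsupp : μ Ξᶜ = 0)
    {F : Type*} [NormedAddCommGroup F] [NormedSpace ℝ F]
    {g : (Fin s → ℝ) → F} (hg : Continuous g) : Integrable g μ := by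
  have hres : μ.restrict Ξ = μ :=
    Measure.restrict_eq_self_of_ae_mem (tch_ae_mem μ hsupp)
  have : IntegrableOn g Ξ μ := hg.continuousOn.integrableOn_compact hΞ
  rwa [IntegrableOn, hres] at this

lemma tch_card (n : ℕ) [Fintype {d : Fin s →₀ ℕ // ∑ i, d i ≤ n}] :
    Fintype.card {d : Fin s →₀ ℕ // ∑ i, d i ≤ n} ≤ Nat.choose (n + s) s := by
  have hinj : Function.Injective
      (fun d : {d : Fin s →₀ ℕ // ∑ i, d i ≤ n} =>
        (⟨Finsupp.toMultiset (Finsupp.cons (n - ∑ i, d.1 i) d.1), by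
          rw [Finsupp.card_toMultiset, Finsupp.sum_fintype _ _ (fun _ => rfl),
            Fin.sum_univ_succ]
          simp only [Finsupp.cons_zero, Finsupp.cons_succ]
          exact Nat.sub_add_cancel d.2⟩ : Sym (Fin (s + 1)) n)) := by
    intro d e h
    have h1 : Finsupp.toMultiset (Finsupp.cons (n - ∑ i, d.1 i) d.1)
        = Finsupp.toMultiset (Finsupp.cons (n - ∑ i, e.1 i) e.1) := congrArg Subtype.val h
    have h2 := congrArg Multiset.toFinsupp h1
    classical
    simp only [Finsupp.toMultiset_toFinsupp] at h2
    have h3 := congrArg Finsupp.tail h2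
    simp only [Finsupp.tail_cons] at h3
    exact Subtype.ext h3
  calc Fintype.card {d : Fin s →₀ ℕ // ∑ i, d i ≤ n}
      ≤ Fintype.card (Sym (Fin (s + 1)) n) := Fintype.card_le_of_injective _ hinj
    _ = Nat.multichoose (s + 1) n := Sym.card_sym_fin_eq_multichoose (s + 1) n
    _ = (s + n).choose n := by rw [Nat.multichoose_eq]; congr 1; omega
    _ = (n + s).choose s := by rw [add_comm s n, Nat.choose_symm_add]

lemma tch_finite (n : ℕ) : {d : Fin s →₀ ℕ | ∑ i, d i ≤ n}.Finite := by
  apply (Set.finite_Iic (Finsupp.equivFunOnFinite.symm (fun _ : Fin s => n))).subset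
  intro d hd
  simp only [Set.mem_setOf_eq] at hd
  simp only [Set.mem_Iic]
  intro i
  have h1 : d i ≤ ∑ j, d j :=
    Finset.single_le_sum (fun j _ => Nat.zero_le (d j)) (Finset.mem_univ i)
  exact h1.trans hd


lemma tch_isCompact_convexHull {E : Type*} [NormedAddCommGroup E] [NormedSpace ℝ E]
    [FiniteDimensional ℝ E] {K : Set E} (hK : IsCompact K) :
    IsCompact (convexHull ℝ K) := by
  classical
  rcases K.eq_empty_or_nonempty with rfl | ⟨k₀, hk₀⟩
  · simpa using isCompact_empty
  set m := Module.finrank ℝ E + 1 with hm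
  have himg : convexHull ℝ K =
      (fun wz : (Fin m → ℝ) × (Fin m → E) => ∑ i, wz.1 i • wz.2 i) ''
        (stdSimplex ℝ (Fin m) ×ˢ Set.univ.pi (fun _ : Fin m => K)) := by
    apply Set.Subset.antisymm
    · intro x hx
      obtain ⟨ι, hι, z, w, hzr, hai, hwp, hws, hzs⟩ :=
        eq_pos_convex_span_of_mem_convexHull hx
      have hcard : Fintype.card ι ≤ m :=
        hai.card_le_finrank_succ.trans (Nat.add_le_add_right (Submodule.finrank_le _) 1)
    
      set r := m - Fintype.card ι with hr
      have hce : Fintype.card (ι ⊕ Fin r) = m := by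
        simp only [Fintype.card_sum, Fintype.card_fin]
        omega
      let e : (ι ⊕ Fin r) ≃ Fin m := Fintype.equivFinOfCardEq hce
      let W : ι ⊕ Fin r → ℝ := Sum.elim w 0
      let Z : ι ⊕ Fin r → E := Sum.elim z (fun _ => k₀)
      refine ⟨(W ∘ e.symm, Z ∘ e.symm), ⟨⟨?_, ?_⟩, ?_⟩, ?_⟩
      · intro j
        rcases h : e.symm j with i | i
        · simp only [Function.comp_apply, h, W, Sum.elim_inl]
          exact (hwp i).le
        · simp [W, h]
      · rw [show ∑ j, (W ∘ e.symm) j = ∑ u, W u from Equiv.sum_comp e.symm W]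
        simp only [W, Fintype.sum_sum_type, Sum.elim_inl, Sum.elim_inr, Pi.zero_apply]
        simp [hws]
      · intro j _
        rcases h : e.symm j with i | i
        · simp only [Function.comp_apply, h, Z, Sum.elim_inl]
          exact hzr (Set.mem_range_self i)
        · simpa [Z, h] using hk₀
      · show ∑ j, (W ∘ e.symm) j • (Z ∘ e.symm) j = x
        rw [show ∑ j, (W ∘ e.symm) j • (Z ∘ e.symm) j
            = ∑ u, W u • Z u from Equiv.sum_comp e.symm (fun u => W u • Z u)]
        simp only [W, Z, Fintype.sum_sum_type, Sum.elim_inl, Sum.elim_inr, Pi.zero_apply,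
          zero_smul, Finset.sum_const_zero, add_zero]
        exact hzs
    · rintro x ⟨⟨w, z⟩, ⟨⟨hw0, hw1⟩, hz⟩, rfl⟩
      refine (convex_convexHull ℝ K).sum_mem (fun i _ => hw0 i) hw1 (fun i _ => ?_)
      exact subset_convexHull ℝ K (hz i (Set.mem_univ i))
  rw [himg]
  have hcomp : IsCompact (stdSimplex ℝ (Fin m) ×ˢ Set.univ.pi (fun _ : Fin m => K)) :=
    (isCompact_stdSimplex (𝕜 := ℝ) (ι := Fin m)).prod (isCompact_univ_pi (fun _ => hK))
  exact hcomp.image (continuous_finset_sum _ (fun i _ =>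
    ((continuous_apply i).comp continuous_fst).smul ((continuous_apply i).comp continuous_snd)))

end aux

/-- Tchakaloff: for a probability measure supported on a compact set
Ξ ⊆ ℝ^s, there is a positive quadrature rule with at most binom(2p+s, s) nodes in Ξ
that is exact for all polynomials of total degree ≤ 2p. -/
theorem stmt_9 {s : ℕ} (Ξ : Set (Fin s → ℝ)) (hΞ : IsCompact Ξ)
    (μ : Measure (Fin s → ℝ)) [IsProbabilityMeasure μ] (hsupp : μ Ξᶜ = 0)
    (p : ℕ) :
    ∃ (Q : ℕ), Q ≤ Nat.choose (2 * p + s) s ∧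
      ∃ (pts : Fin Q → (Fin s → ℝ)) (w : Fin Q → ℝ),
        (∀ j, pts j ∈ Ξ) ∧ (∀ j, 0 ≤ w j) ∧
        ∀ q : MvPolynomial (Fin s) ℝ, q.totalDegree ≤ 2 * p →
          ∫ x, MvPolynomial.eval x q ∂μ = ∑ j, w j * MvPolynomial.eval (pts j) q := by
  classical
  set n := 2 * p with hn
  let D := {d : Fin s →₀ ℕ // ∑ i, d i ≤ n}
  haveI : Fintype D := (tch_finite n).fintype
  let E := D → ℝ
  let f : (Fin s → ℝ) → E := fun x d => ∏ i, x i ^ (d.1 i)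
  have hf : Continuous f := by
    apply continuous_pi
    intro d
    exact continuous_finset_prod _ (fun i _ => (continuous_apply i).pow _)
  have hInt : Integrable f μ := tch_integrable hΞ μ hsupp hf
  have hmem : (∫ x, f x ∂μ) ∈ convexHull ℝ (f '' Ξ) := by
    have hK : IsCompact (f '' Ξ) := hΞ.image hf
    refine (convex_convexHull ℝ _).integral_mem (tch_isCompact_convexHull hK).isClosed ?_ hInt
    filter_upwards [tch_ae_mem μ hsupp] with x hx
    exact subset_convexHull ℝ _ ⟨x, hx, rfl⟩
  obtain ⟨ι, hι, z, w, hz_range, hz_ai, hw_pos, hw_sum, hz_sum⟩ :=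
    eq_pos_convex_span_of_mem_convexHull hmem
  have hpre : ∀ i, ∃ x ∈ Ξ, f x = z i := fun i => by
    obtain ⟨x, hx, hfx⟩ := hz_range (Set.mem_range_self i)
    exact ⟨x, hx, hfx⟩
  choose pt hptΞ hfpt using hpre
  -- the zero monomial
  let d₀ : D := ⟨0, by simp⟩
  have hd0 : ∀ i, z i d₀ = 1 := fun i => by
    rw [← hfpt i]; simp [f, d₀]
  -- cardinality bound
  have hcard : Fintype.card ι ≤ Fintype.card D := by
    let L : E →ₗ[ℝ] ℝ := LinearMap.proj d₀
    have hLsurj : Function.Surjective L := fun c => ⟨fun _ => c, rfl⟩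
    have hspan : vectorSpan ℝ (Set.range z) ≤ LinearMap.ker L := by
      rw [vectorSpan_def, Submodule.span_le]
      rintro v ⟨a, ⟨i, rfl⟩, b, ⟨j, rfl⟩, rfl⟩
      simp only [SetLike.mem_coe, LinearMap.mem_ker, vsub_eq_sub, map_sub, L]
      show z i d₀ - z j d₀ = 0
      rw [hd0 i, hd0 j, sub_self]
    have h1 : Fintype.card ι ≤ finrank ℝ (vectorSpan ℝ (Set.range z)) + 1 :=
      hz_ai.card_le_finrank_succ
    have h2 : finrank ℝ (LinearMap.ker L) + 1 = Fintype.card D := by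
      have := LinearMap.finrank_range_add_finrank_ker L
      rw [LinearMap.range_eq_top.mpr hLsurj] at this
      simp only [finrank_top, finrank_self] at this
      rw [Module.finrank_fintype_fun_eq_card] at this
      omega
    calc Fintype.card ι ≤ finrank ℝ (vectorSpan ℝ (Set.range z)) + 1 := h1
      _ ≤ finrank ℝ (LinearMap.ker L) + 1 := by
          exact Nat.add_le_add_right (Submodule.finrank_mono hspan) 1
      _ = Fintype.card D := h2
  -- monomial exactness
  have hmono : ∀ δ : D, ∫ x, (∏ i, x i ^ (δ.1 i)) ∂μ = ∑ i, w i * (∏ k, pt i k ^ (δ.1 k)) := by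
    intro δ
    have h1 : ∫ x, (∏ i, x i ^ (δ.1 i)) ∂μ = (∫ x, f x ∂μ) δ := by
      have hL := (ContinuousLinearMap.proj (R := ℝ) (φ := fun _ : D => ℝ) δ).integral_comp_comm hInt
      exact hL
    have h2 : (∫ x, f x ∂μ) δ = ∑ i, w i * z i δ := by
      rw [← hz_sum]
      rw [Finset.sum_apply]
      rfl
    have h3 : ∀ i, z i δ = ∏ k, pt i k ^ (δ.1 k) := fun i => by rw [← hfpt i]
    rw [h1, h2]
    exact Finset.sum_congr rfl (fun i _ => by rw [h3 i])
  -- package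
  obtain ⟨e⟩ : Nonempty (ι ≃ Fin (Fintype.card ι)) := ⟨Fintype.equivFin ι⟩
  refine ⟨Fintype.card ι, ?_, pt ∘ e.symm, w ∘ e.symm, fun j => hptΞ _, fun j => (hw_pos _).le, ?_⟩
  · exact hcard.trans (tch_card n)
  intro q hq
  have hsupdeg : ∀ d ∈ q.support, ∑ i, d i ≤ n := by
    intro d hd
    have h1 := MvPolynomial.le_totalDegree hd
    have h2 : d.sum (fun _ e => e) = ∑ i, d i := Finsupp.sum_fintype _ _ (fun _ => rfl)
    rw [h2] at h1
    exact h1.trans hq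
  have hIntMono : ∀ d : Fin s →₀ ℕ,
      Integrable (fun x : Fin s → ℝ => MvPolynomial.coeff d q * ∏ i, x i ^ d i) μ := by
    intro d
    exact tch_integrable hΞ μ hsupp
      (continuous_const.mul (continuous_finset_prod _ (fun i _ => (continuous_apply i).pow _)))
  calc ∫ x, MvPolynomial.eval x q ∂μ
      = ∫ x, ∑ d ∈ q.support, MvPolynomial.coeff d q * ∏ i, x i ^ d i ∂μ := by
        congr 1; funext x; rw [MvPolynomial.eval_eq']
    _ = ∑ d ∈ q.support, ∫ x, MvPolynomial.coeff d q * ∏ i, x i ^ d i ∂μ :=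
        integral_finset_sum _ (fun d _ => hIntMono d)
    _ = ∑ d ∈ q.support, MvPolynomial.coeff d q * ∑ i, w i * ∏ k, pt i k ^ d k := by
        refine Finset.sum_congr rfl (fun d hd => ?_)
        rw [integral_const_mul, hmono ⟨d, hsupdeg d hd⟩]
    _ = ∑ i, w i * ∑ d ∈ q.support, MvPolynomial.coeff d q * ∏ k, pt i k ^ d k := by
        simp_rw [Finset.mul_sum]
        rw [Finset.sum_comm]
        refine Finset.sum_congr rfl (fun i _ => ?_)
        refine Finset.sum_congr rfl (fun d _ => by ring)
    _ = ∑ j, (w ∘ e.symm) j * MvPolynomial.eval ((pt ∘ e.symm) j) q := by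
        rw [← Equiv.sum_comp e.symm (fun i => w i * ∑ d ∈ q.support,
          MvPolynomial.coeff d q * ∏ k, pt i k ^ d k)]
        refine Finset.sum_congr rfl (fun j _ => ?_)
        simp only [Function.comp_apply, MvPolynomial.eval_eq']
end
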